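/- Let D be a finite distributive lattice graded by the rank function r (the height function), and suppose some level of D equals {a, b} with a ≠ b (i.e., {x ∈ D : r(x) = i} = {a, b} for some i). Then a ⊓ b is covered by a and a ⊓ b is covered by b, and every element of D that covers a ⊓ b is equal to a or to b. -/
import Mathlib

open Classical in
/-- Strict monotonicity of a rank function on a finite order. -/
lemma rank_lt_of_lt {D : Type*} [PartialOrder D] [Fintype D] (r : D → ℕ)
    (hrcov : ∀ x y : D, x ⋖ y → r y = r x + 1) :
    ∀ x y : D, x < y → r x < r y := by
  letI := Fintype.toLocallyFiniteOrder (α := D)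
  have wf : WellFounded ((· > ·) : D → D → Prop) := (Finite.to_wellFoundedGT).wf
  intro x
  induction x using wf.induction with
  | _ x IH =>
    intro y hxy
    obtain ⟨z, hz, hzy⟩ := exists_covBy_le_of_lt hxy
    rcases eq_or_lt_of_le hzy with rfl | hlt
    · rw [hrcov _ _ hz]; omega
    · have h1 := hrcov _ _ hz
      have h2 := IH z hz.lt y hlt
      omega

open Classical in
/-- A rank-interpolation lemma: a saturated chain hits every rank. -/
lemma rank_chain {D : Type*} [PartialOrder D] [Fintype D] (r : D → ℕ)
    (hrcov : ∀ x y : D, x ⋖ y → r y = r x + 1) (y : D) :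
    ∀ (n : ℕ) (x : D), x ≤ y → r x + n ≤ r y → ∃ w, x ≤ w ∧ w ≤ y ∧ r w = r x + n := by
  letI := Fintype.toLocallyFiniteOrder (α := D)
  intro n
  induction n with
  | zero => exact fun x hx _ => ⟨x, le_rfl, hx, by omega⟩
  | succ n IH =>
    intro x hxy hle
    have hxy' : x < y := by
      rcases eq_or_lt_of_le hxy with rfl | h
      · omega
      · exact h
    obtain ⟨z, hz, hzy⟩ := exists_covBy_le_of_lt hxy'
    have h1 := hrcov _ _ hz
    obtain ⟨w, hw1, hw2, hw3⟩ := IH z hzy (by omega)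
    exact ⟨w, le_trans hz.le hw1, hw2, by omega⟩

/-- Diamond lemma in a distributive lattice: two distinct covers of `m` are
both covered by their join. -/
lemma covBy_sup_of_covBy {D : Type*} [DistribLattice D] {m z w : D}
    (hz : m ⋖ z) (hw : m ⋖ w) (hzw : z ≠ w) : z ⋖ z ⊔ w := by
  have hwz : ¬ w ≤ z := by
    intro h
    rcases hz.eq_or_eq (c := w) hw.lt.le h with h' | h'
    · exact hw.lt.ne' h'
    · exact hzw h'.symm
  constructor
  · exact lt_of_le_of_ne le_sup_left (by
      intro h
      exact hwz (le_sup_right.trans h.ge))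
  · intro c hc1 hc2
    have hcw : c ⊓ w = m ∨ c ⊓ w = w := by
      have hm : m ≤ c ⊓ w := le_inf (hz.lt.le.trans hc1.le) hw.lt.le
      rcases eq_or_lt_of_le hm with h | h
      · exact Or.inl h.symm
      · exact Or.inr (eq_of_le_of_not_lt inf_le_right (hw.2 h))
    rcases hcw with h | h
    · have : c = z := by
        have hcu : c ≤ z ⊔ w := hc2.le
        calc c = c ⊓ (z ⊔ w) := (inf_eq_left.mpr hcu).symm
          _ = (c ⊓ z) ⊔ (c ⊓ w) := inf_sup_left c z w
          _ = z ⊔ m := by rw [inf_eq_right.mpr hc1.le, h]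
          _ = z := sup_eq_left.mpr hz.lt.le
      exact hc1.ne' this
    · have : z ⊔ w ≤ c := sup_le hc1.le (h ▸ inf_le_left)
      exact absurd hc2 (not_lt_of_ge this)

/-- If some level of a finite distributive lattice `D` (graded by the rank function
`r`) equals `{a, b}` with `a ≠ b`, then `a ⊓ b` is covered by both `a` and `b`,
and `a` and `b` are the only covers of `a ⊓ b` in `D`. -/
theorem stmt10 {D : Type*} [DistribLattice D] [Fintype D] [BoundedOrder D]
    (r : D → ℕ) (hr0 : r ⊥ = 0) (hrcov : ∀ x y : D, x ⋖ y → r y = r x + 1)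
    (i : ℕ) (a b : D) (hab : a ≠ b)
    (hlevel : {x : D | r x = i} = {a, b}) :
    (a ⊓ b) ⋖ a ∧ (a ⊓ b) ⋖ b ∧ ∀ z : D, (a ⊓ b) ⋖ z → z = a ∨ z = b := by
  classical
  letI := Fintype.toLocallyFiniteOrder (α := D)
  have hsm := rank_lt_of_lt r hrcov
  have ha : r a = i := by
    have : a ∈ {x : D | r x = i} := by rw [hlevel]; exact Or.inl rfl
    exact this
  have hb : r b = i := by
    have : b ∈ {x : D | r x = i} := by rw [hlevel]; exact Or.inr rfl
    exact this
  -- a and b are incomparable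
  have hnab : ¬ a ≤ b := by
    intro h
    have := hsm a b (lt_of_le_of_ne h hab)
    omega
  have hnba : ¬ b ≤ a := by
    intro h
    have := hsm b a (lt_of_le_of_ne h (Ne.symm hab))
    omega
  set m := a ⊓ b with hm
  have hma : m < a := lt_of_le_of_ne inf_le_left (by
    intro h; exact hnab (h ▸ inf_le_right))
  have hmb : m < b := lt_of_le_of_ne inf_le_right (by
    intro h; exact hnba (h ▸ inf_le_left))
  have hrm : r m < i := ha ▸ hsm m a hma
  -- any element with rank ≤ i lies below a or b
  have F : ∀ z : D, r z ≤ i → z ≤ a ∨ z ≤ b := by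
    intro z hz
    have hti : i ≤ r ⊤ := by
      rcases eq_or_lt_of_le (le_top : a ≤ ⊤) with h | h
      · rw [← ha, h]
      · exact ha ▸ (hsm a ⊤ h).le
    obtain ⟨w, hw1, _, hw3⟩ := rank_chain r hrcov ⊤ (i - r z) z le_top (by omega)
    have hwi : r w = i := by omega
    have : w ∈ {x : D | r x = i} := hwi
    rw [hlevel] at this
    rcases this with h | h
    · exact Or.inl (h ▸ hw1)
    · exact Or.inr (h ▸ hw1)
  -- covers of m below a and below b exist
  obtain ⟨z, hzc, hza⟩ := exists_covBy_le_of_lt hma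
  obtain ⟨w, hwc, hwb⟩ := exists_covBy_le_of_lt hmb
  have hzw : z ≠ w := by
    rintro rfl
    exact hzc.lt.not_ge (le_inf hza hwb)
  -- rank of m is i - 1
  have hrmi : r m + 1 = i := by
    by_contra h
    have hlt : r m + 1 < i := by omega
    have hu : z ⋖ z ⊔ w := covBy_sup_of_covBy hzc hwc hzw
    have hru : r (z ⊔ w) = r m + 2 := by
      have h1 := hrcov _ _ hzc
      have h2 := hrcov _ _ hu
      omega
    rcases F (z ⊔ w) (by omega) with h' | h'
    · exact hwc.lt.not_ge (le_inf (le_trans le_sup_right h') hwb)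
    · exact hzc.lt.not_ge (le_inf hza (le_trans le_sup_left h'))
  have hcova : m ⋖ a := by
    refine ⟨hma, fun c hc1 hc2 => ?_⟩
    have h1 := hsm m c hc1
    have h2 := hsm c a hc2
    omega
  have hcovb : m ⋖ b := by
    refine ⟨hmb, fun c hc1 hc2 => ?_⟩
    have h1 := hsm m c hc1
    have h2 := hsm c b hc2
    omega
  refine ⟨hcova, hcovb, fun c hc => ?_⟩
  have : r c = i := by have := hrcov _ _ hc; omega
  have : c ∈ {x : D | r x = i} := this
  rw [hlevel] at this
  exact this
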